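/- Let K be a field, r ≥ 1 an integer, and 0 ≤ a ≤ r an integer. Let k ∈ SL₂(K⟦t⟧) with k ≡ 1 (mod t^{2r}), let h₁, h₂ ∈ SL₂(K⟦t⟧), and set g = h₁·diag(t^a, t^{−a})·h₂ ∈ SL₂(K((t))). Then g⁻¹·k·g has all of its entries in K⟦t⟧, i.e. g⁻¹·k·g ∈ SL₂(K⟦t⟧). (Thus right translation by k fixes the coset g·SL₂(K⟦t⟧): elements of G^{2r} act trivially on the points of the closure of the r-th cell of the affine Grassmannian of SL₂.) -/

import Mathlib

open Matrix PowerSeries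

/-- The inclusion of formal power series into Laurent series. -/
noncomputable def PStoLS (K : Type*) [Field K] : PowerSeries K →+* LaurentSeries K :=
  HahnSeries.ofPowerSeries ℤ K

/-- The inclusion `SL₂(K⟦t⟧) → SL₂(K((t)))`. -/
noncomputable def SL2toLS (K : Type*) [Field K] :
    SpecialLinearGroup (Fin 2) (PowerSeries K) →* SpecialLinearGroup (Fin 2) (LaurentSeries K) :=
  SpecialLinearGroup.map (PStoLS K)

/-- The element `t` of `K((t))`. -/
noncomputable def tLS (K : Type*) [Field K] : LaurentSeries K :=
  ((X : PowerSeries K) : LaurentSeries K)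

/-- Membership in the congruence subgroup `G^n ⊆ SL₂(K⟦t⟧)`: every entry of `g - 1`
is divisible by `t^n`. -/
def InCongr (K : Type*) [Field K] (n : ℕ) (g : SpecialLinearGroup (Fin 2) (PowerSeries K)) :
    Prop :=
  ∀ i j, (X : PowerSeries K) ^ n ∣ ((g : Matrix (Fin 2) (Fin 2) (PowerSeries K)) - 1) i j

/-- If `k ∈ G^{2r}` and `g = h₁·diag(t^a, t^{-a})·h₂` with `h₁, h₂ ∈ SL₂(K⟦t⟧)` and
`0 ≤ a ≤ r`, then `g⁻¹·k·g ∈ SL₂(K⟦t⟧)`: elements of `G^{2r}` act trivially on the points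
of the closure of the `r`-th cell of the affine Grassmannian of `SL₂`. -/
theorem stmt4 {K : Type*} [Field K] (r a : ℕ) (hr : 1 ≤ r) (ha : a ≤ r)
    (k : SpecialLinearGroup (Fin 2) (PowerSeries K)) (hk : InCongr K (2 * r) k)
    (h₁ h₂ : SpecialLinearGroup (Fin 2) (PowerSeries K))
    (d : SpecialLinearGroup (Fin 2) (LaurentSeries K))
    (hd : (d : Matrix (Fin 2) (Fin 2) (LaurentSeries K)) = !![tLS K ^ a, 0; 0, (tLS K ^ a)⁻¹])
    (g : SpecialLinearGroup (Fin 2) (LaurentSeries K))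
    (hg : g = SL2toLS K h₁ * d * SL2toLS K h₂) :
    ∃ w : SpecialLinearGroup (Fin 2) (PowerSeries K),
      SL2toLS K w = g⁻¹ * SL2toLS K k * g := by
  classical
  set m : SpecialLinearGroup (Fin 2) (PowerSeries K) := h₁⁻¹ * k * h₁ with hm_def
  -- m is still in the congruence subgroup
  have hAB : ((h₁⁻¹ : SpecialLinearGroup (Fin 2) (PowerSeries K)) : Matrix (Fin 2) (Fin 2) (PowerSeries K)) * h₁ = 1 := by
    exact congrArg Subtype.val (inv_mul_cancel h₁)
  have hmat : ((m : Matrix (Fin 2) (Fin 2) (PowerSeries K)) - 1)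
      = (h₁⁻¹ : SpecialLinearGroup (Fin 2) (PowerSeries K)) *
        (((k : Matrix (Fin 2) (Fin 2) (PowerSeries K)) - 1) * h₁) := by
    have : (m : Matrix (Fin 2) (Fin 2) (PowerSeries K))
        = (h₁⁻¹ : SpecialLinearGroup (Fin 2) (PowerSeries K)) * k * h₁ := by
      simp [hm_def]
    rw [this, sub_mul, mul_sub, one_mul, hAB, mul_assoc]
  have hm : InCongr K (2 * r) m := by
    intro i j
    rw [hmat, Matrix.mul_apply]
    refine Finset.dvd_sum fun x _ => ?_
    rw [Matrix.mul_apply]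
    rw [Finset.mul_sum]
    refine Finset.dvd_sum fun y _ => ?_
    exact Dvd.dvd.mul_left (Dvd.dvd.mul_right (hk x y) _) _
  -- entries of m
  have hoff : ∀ i j, i ≠ j →
      (X : PowerSeries K) ^ (2 * a) ∣ (m : Matrix (Fin 2) (Fin 2) (PowerSeries K)) i j := by
    intro i j hij
    have := hm i j
    rw [Matrix.sub_apply, Matrix.one_apply_ne hij, sub_zero] at this
    exact dvd_trans (pow_dvd_pow _ (by omega)) this
  obtain ⟨b, hb⟩ := hoff 0 1 (by decide)
  -- the candidate matrix
  have hdm : (m : Matrix (Fin 2) (Fin 2) (PowerSeries K)).det = 1 := m.property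
  rw [Matrix.det_fin_two] at hdm
  have hdetW : (!![(m : Matrix (Fin 2) (Fin 2) (PowerSeries K)) 0 0, b;
      (m : Matrix (Fin 2) (Fin 2) (PowerSeries K)) 1 0 * X ^ (2 * a),
      (m : Matrix (Fin 2) (Fin 2) (PowerSeries K)) 1 1] :
      Matrix (Fin 2) (Fin 2) (PowerSeries K)).det = 1 := by
    rw [Matrix.det_fin_two_of]
    rw [hb] at hdm
    linear_combination hdm
  set w₀ : SpecialLinearGroup (Fin 2) (PowerSeries K) := ⟨_, hdetW⟩ with hw₀_def
  have htne : tLS K ^ a ≠ 0 := by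
    apply pow_ne_zero
    have h1 : tLS K = HahnSeries.single (1 : ℤ) (1 : K) := HahnSeries.ofPowerSeries_X
    rw [h1]
    exact HahnSeries.single_ne_zero one_ne_zero
  have hφX : PStoLS K X = tLS K := rfl
  have hcoe : ∀ (u : SpecialLinearGroup (Fin 2) (PowerSeries K)),
      ((SL2toLS K u : SpecialLinearGroup (Fin 2) (LaurentSeries K)) :
        Matrix (Fin 2) (Fin 2) (LaurentSeries K)) =
      (u : Matrix (Fin 2) (Fin 2) (PowerSeries K)).map (PStoLS K) := fun u => rfl
  have hdinv : ((d⁻¹ : SpecialLinearGroup (Fin 2) (LaurentSeries K)) :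
      Matrix (Fin 2) (Fin 2) (LaurentSeries K)) = !![(tLS K ^ a)⁻¹, 0; 0, tLS K ^ a] := by
    rw [show ((d⁻¹ : SpecialLinearGroup (Fin 2) (LaurentSeries K)) :
      Matrix (Fin 2) (Fin 2) (LaurentSeries K)) = adjugate (d : Matrix (Fin 2) (Fin 2) (LaurentSeries K)) from rfl,
      hd, Matrix.adjugate_fin_two]
    norm_num
  have hbb : PStoLS K ((m : Matrix (Fin 2) (Fin 2) (PowerSeries K)) 0 1)
      = tLS K ^ (2 * a) * PStoLS K b := by
    rw [hb, _root_.map_mul, map_pow, hφX]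
  have hmm : ((m : Matrix (Fin 2) (Fin 2) (PowerSeries K)).map (PStoLS K))
      = !![PStoLS K ((m : Matrix (Fin 2) (Fin 2) (PowerSeries K)) 0 0),
          PStoLS K ((m : Matrix (Fin 2) (Fin 2) (PowerSeries K)) 0 1);
          PStoLS K ((m : Matrix (Fin 2) (Fin 2) (PowerSeries K)) 1 0),
          PStoLS K ((m : Matrix (Fin 2) (Fin 2) (PowerSeries K)) 1 1)] := by
    ext i j; fin_cases i <;> fin_cases j <;> simp
  have hww : ((w₀ : Matrix (Fin 2) (Fin 2) (PowerSeries K)).map (PStoLS K))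
      = !![PStoLS K ((m : Matrix (Fin 2) (Fin 2) (PowerSeries K)) 0 0), PStoLS K b;
          PStoLS K ((m : Matrix (Fin 2) (Fin 2) (PowerSeries K)) 1 0) * tLS K ^ (2 * a),
          PStoLS K ((m : Matrix (Fin 2) (Fin 2) (PowerSeries K)) 1 1)] := by
    ext i j
    fin_cases i <;> fin_cases j <;> simp [hw₀_def, _root_.map_mul, map_pow, hφX]
  have key : SL2toLS K w₀ = d⁻¹ * SL2toLS K m * d := by
    refine Subtype.ext (Matrix.ext fun i j => ?_)
    show ((w₀ : Matrix (Fin 2) (Fin 2) (PowerSeries K)).map (PStoLS K)) i j = _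
    rw [show ((d⁻¹ * SL2toLS K m * d : SpecialLinearGroup (Fin 2) (LaurentSeries K)) :
        Matrix (Fin 2) (Fin 2) (LaurentSeries K)) =
        ((d⁻¹ : SpecialLinearGroup (Fin 2) (LaurentSeries K)) :
          Matrix (Fin 2) (Fin 2) (LaurentSeries K)) *
        ((m : Matrix (Fin 2) (Fin 2) (PowerSeries K)).map (PStoLS K)) *
        (d : Matrix (Fin 2) (Fin 2) (LaurentSeries K)) from by
      rfl]
    rw [hww, hdinv, hd, hmm, Matrix.mul_fin_two, Matrix.mul_fin_two]
    fin_cases i <;> fin_cases j <;>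
      simp only [Matrix.cons_val', Matrix.cons_val_zero, Matrix.cons_val_one, Matrix.head_cons,
        Matrix.head_fin_const, Matrix.empty_val', Matrix.cons_val_fin_one, Fin.isValue,
        Matrix.of_apply, Fin.zero_eta, Fin.mk_one, zero_mul, mul_zero, add_zero, zero_add] <;>
      (try field_simp)
    · rw [hbb]; ring
    all_goals ring
  refine ⟨h₂⁻¹ * w₀ * h₂, ?_⟩
  have him : SL2toLS K m = (SL2toLS K h₁)⁻¹ * SL2toLS K k * SL2toLS K h₁ := by
    rw [hm_def, _root_.map_mul, _root_.map_mul, map_inv]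
  rw [_root_.map_mul, _root_.map_mul, map_inv, key, him, hg]
  group
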